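/- Let α < 0 and β, λ > 0, and let X be a non-negative absolutely continuous random variable with cumulative distribution function F, differentiable on (0, +∞) with derivative f, satisfying 0 < F(x) < 1 for all x > 0. If the α-generalized reversed aging intensity function of X equals L̆_α(x) = (αβλ/x^β) · exp(−λα/x^β)/(1 − exp(−λα/x^β)) for every x ∈ (0, +∞), then there exists γ ∈ (0, +∞) such that F(x) = [1 − γα(exp(−λα/x^β) − 1)]^{1/α} for all x ∈ (0, +∞). -/

import Mathlib

/-- The α-generalized reversed aging intensity function. -/
noncomputable def genRAI (F f : ℝ → ℝ) (α x : ℝ) : ℝ :=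
  if α = 0 then -(x * f x) / (F x * Real.log (F x))
  else α * x * F x ^ (α - 1) * f x / (1 - F x ^ α)

private lemma const_aux {φ : ℝ → ℝ} (h : ∀ t ∈ Set.Ioi (0:ℝ), HasDerivAt φ 0 t) :
    ∀ x ∈ Set.Ioi (0:ℝ), φ x = φ 1 := by
  intro x hx
  simp only [Set.mem_Ioi] at hx
  rcases le_total x 1 with hx1 | hx1
  · have := constant_of_has_deriv_right_zero (f := φ) (a := x) (b := 1)
      (fun t ht => (h t (lt_of_lt_of_le hx ht.1)).continuousAt.continuousWithinAt)
      (fun t ht => (h t (lt_of_lt_of_le hx ht.1)).hasDerivWithinAt)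
      1 ⟨hx1, le_refl 1⟩
    exact this.symm
  · exact constant_of_has_deriv_right_zero (f := φ) (a := 1) (b := x)
      (fun t ht => (h t (lt_of_lt_of_le one_pos ht.1)).continuousAt.continuousWithinAt)
      (fun t ht => (h t (lt_of_lt_of_le one_pos ht.1)).hasDerivWithinAt)
      x ⟨hx1, le_refl x⟩

theorem stmt_10 (α β lam : ℝ) (hα : α < 0) (hβ : 0 < β) (hlam : 0 < lam)
    (F f : ℝ → ℝ)
    (hmono : Monotone F)
    (hd : ∀ x ∈ Set.Ioi (0:ℝ), HasDerivAt F (f x) x)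
    (hF : ∀ x ∈ Set.Ioi (0:ℝ), 0 < F x ∧ F x < 1)
    (hfi : ∀ u v : ℝ, 0 < u → 0 < v → IntervalIntegrable f MeasureTheory.volume u v)
    (hL : ∀ x > (0:ℝ), genRAI F f α x =
      α * β * lam / x ^ β *
        (Real.exp (-(lam * α) / x ^ β) / (1 - Real.exp (-(lam * α) / x ^ β)))) :
    ∃ γ > (0:ℝ), ∀ x > (0:ℝ),
      F x = (1 - γ * α * (Real.exp (-(lam * α) / x ^ β) - 1)) ^ (1/α) := by
  have hα0 : α ≠ 0 := ne_of_lt hα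
  set c : ℝ := -(lam * α) with hc
  have hcpos : 0 < c := by
    rw [hc]; nlinarith
  -- definitions
  set G : ℝ → ℝ := fun x => 1 - F x ^ α with hG
  set H : ℝ → ℝ := fun x => Real.exp (c / x ^ β) - 1 with hH
  -- basic positivity facts
  have hGneg : ∀ x ∈ Set.Ioi (0:ℝ), G x < 0 := by
    intro x hx
    have h1 : 1 < F x ^ α :=
      (Real.one_lt_rpow_iff_of_pos (hF x hx).1).2 (Or.inr ⟨(hF x hx).2, hα⟩)
    simp only [hG]; linarith
  have hHpos : ∀ x ∈ Set.Ioi (0:ℝ), 0 < H x := by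
    intro x hx
    have hxp : (0:ℝ) < x := hx
    have : 0 < c / x ^ β := div_pos hcpos (Real.rpow_pos_of_pos hxp β)
    have := Real.one_lt_exp_iff.2 this
    simp only [hH]; linarith
  -- derivatives
  have hG' : ∀ x ∈ Set.Ioi (0:ℝ),
      HasDerivAt G (-(f x * α * F x ^ (α - 1))) x := by
    intro x hx
    have h0 : HasDerivAt (fun y => F y ^ α) (f x * α * F x ^ (α - 1)) x :=
      (hd x hx).rpow_const (p := α) (Or.inl (hF x hx).1.ne')
    exact h0.const_sub 1
  have hH' : ∀ x ∈ Set.Ioi (0:ℝ),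
      HasDerivAt H (Real.exp (c / x ^ β) * (c * (-β * x ^ (-β - 1)))) x := by
    intro x hx
    have hxp : (0:ℝ) < x := hx
    have h1 : HasDerivAt (fun y : ℝ => c * y ^ (-β)) (c * (-β * x ^ (-β - 1))) x :=
      (Real.hasDerivAt_rpow_const (p := -β) (Or.inl hxp.ne')).const_mul c
    have h2 : HasDerivAt (fun y : ℝ => c / y ^ β) (c * (-β * x ^ (-β - 1))) x := by
      apply h1.congr_of_eventuallyEq
      filter_upwards [isOpen_Ioi.mem_nhds hx] with y hy
      rw [Real.rpow_neg (le_of_lt hy)]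
      ring
    exact (h2.exp.sub_const 1)
  -- key identity : G' H = H' G on Ioi 0
  have hkey : ∀ x ∈ Set.Ioi (0:ℝ),
      (-(f x * α * F x ^ (α - 1))) * H x
        = (Real.exp (c / x ^ β) * (c * (-β * x ^ (-β - 1)))) * G x := by
    intro x hx
    have hxp : (0:ℝ) < x := hx
    have hLx := hL x hxp
    rw [genRAI, if_neg hα0] at hLx
    have hxb : (0:ℝ) < x ^ β := Real.rpow_pos_of_pos hxp β
    have hGx : G x < 0 := hGneg x hx
    have hHx : 0 < H x := hHpos x hx
    have hGne : (1 : ℝ) - F x ^ α ≠ 0 := by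
      simpa [hG] using hGx.ne
    have hHne : (1 : ℝ) - Real.exp (c / x ^ β) ≠ 0 := by
      have : Real.exp (c / x ^ β) - 1 ≠ 0 := by simpa [hH] using hHx.ne'
      intro h; apply this; linarith
    -- rewrite -(lam*α)/x^β as c / x^β
    have harg : -(lam * α) / x ^ β = c / x ^ β := by rw [hc]
    rw [harg] at hLx
    have hxne : x ≠ 0 := hxp.ne'
    have hpow : x ^ (-β - 1) = (x ^ β)⁻¹ * x⁻¹ := by
      rw [show -β - 1 = -β + (-1 : ℝ) by ring, Real.rpow_add hxp,
        Real.rpow_neg hxp.le, Real.rpow_neg_one]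
    -- clear denominators in hLx and conclude
    simp only [hG, hH, hpow]
    field_simp at hLx ⊢
    linear_combination α * hLx
  -- φ = G / H has zero derivative
  have hφ : ∀ x ∈ Set.Ioi (0:ℝ), HasDerivAt (fun y => G y / H y) 0 x := by
    intro x hx
    have h := (hG' x hx).div (hH' x hx) (hHpos x hx).ne'
    have : (-(f x * α * F x ^ (α - 1)) * H x
        - G x * (Real.exp (c / x ^ β) * (c * (-β * x ^ (-β - 1))))) / H x ^ 2 = 0 := by
      rw [hkey x hx]; ring
    rwa [this] at h
  have hconst := const_aux hφ
  set c0 : ℝ := G 1 / H 1 with hc0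
  have h1 : (1:ℝ) ∈ Set.Ioi (0:ℝ) := Set.mem_Ioi.2 one_pos
  have hc0neg : c0 < 0 := div_neg_of_neg_of_pos (hGneg 1 h1) (hHpos 1 h1)
  refine ⟨c0 / α, div_pos_of_neg_of_neg hc0neg hα, ?_⟩
  intro x hx
  have hx' : x ∈ Set.Ioi (0:ℝ) := hx
  have hGH : G x = c0 * H x := by
    have h2 := hconst x hx'
    rw [div_eq_div_iff (hHpos x hx').ne' (hHpos 1 h1).ne'] at h2
    rw [hc0, div_mul_eq_mul_div, eq_div_iff (hHpos 1 h1).ne']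
    linarith [h2]
  have harg : -(lam * α) / x ^ β = c / x ^ β := by rw [hc]
  have hFα : F x ^ α = 1 - c0 / α * α * (Real.exp (-(lam * α) / x ^ β) - 1) := by
    rw [harg, div_mul_cancel₀ _ hα0]
    have : G x = 1 - F x ^ α := rfl
    have hH1 : H x = Real.exp (c / x ^ β) - 1 := rfl
    rw [this, hH1] at hGH
    linarith
  rw [← hFα, one_div, Real.rpow_rpow_inv (hF x hx').1.le hα0]
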